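/- The identity 𝒩₂⁰(x̂) = −∇_S Y₁⁰(x̂) + 2 Y₁⁰(x̂) x̂ = N⁽⁰⁾ · (Y₂⁻², Y₂⁻¹, Y₂⁰, Y₂¹, Y₂²)ᵀ(x̂) holds for all x̂ ∈ 𝕊², where N⁽⁰⁾ is the 3×5 complex matrix with rows (0, 3√10/10, 0, −3√10/10, 0), (0, 3√10/10·i, 0, 3√10/10·i, 0), (0, 0, 2√15/5, 0, 0). -/

import Mathlib

open Real Complex

local notation "E3" => EuclideanSpace ℝ (Fin 3)

/-- Radial projection `x ↦ x/‖x‖`. -/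
noncomputable def unitize (x : E3) : E3 := ‖x‖⁻¹ • x

/-- Surface gradient on `𝕊²`: gradient of the degree-0 homogeneous extension. -/
noncomputable def surfGrad (f : E3 → ℂ) (x : E3) (i : Fin 3) : ℂ :=
  fderiv ℝ (fun y => f (unitize y)) x (EuclideanSpace.single i 1)

/-- `Y₁⁰(x̂) = √(3/(4π)) x̂₃`. -/
noncomputable def Y10 (x : E3) : ℂ := (Real.sqrt (3 / (4 * Real.pi)) : ℂ) * (x 2 : ℂ)

/-- The degree-2 complex spherical harmonics (Condon–Shortley normalization)
`(Y₂⁻², Y₂⁻¹, Y₂⁰, Y₂¹, Y₂²)`, in Cartesian coordinates on the unit sphere. -/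
noncomputable def Y2 : Fin 5 → E3 → ℂ :=
  ![fun x => (Real.sqrt (15 / (32 * Real.pi)) : ℂ) * ((x 0 : ℂ) - Complex.I * (x 1 : ℂ)) ^ 2,
    fun x => (Real.sqrt (15 / (8 * Real.pi)) : ℂ) *
      ((x 0 : ℂ) - Complex.I * (x 1 : ℂ)) * (x 2 : ℂ),
    fun x => (Real.sqrt (5 / (16 * Real.pi)) : ℂ) * (3 * (x 2 : ℂ) ^ 2 - 1),
    fun x => -(Real.sqrt (15 / (8 * Real.pi)) : ℂ) *
      ((x 0 : ℂ) + Complex.I * (x 1 : ℂ)) * (x 2 : ℂ),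
    fun x => (Real.sqrt (15 / (32 * Real.pi)) : ℂ) * ((x 0 : ℂ) + Complex.I * (x 1 : ℂ)) ^ 2]

/-- The matrix `N⁽⁰⁾`. -/
noncomputable def N0 : Matrix (Fin 3) (Fin 5) ℂ :=
  !![0, ((3 * Real.sqrt 10 / 10 : ℝ) : ℂ), 0, -((3 * Real.sqrt 10 / 10 : ℝ) : ℂ), 0;
     0, ((3 * Real.sqrt 10 / 10 : ℝ) : ℂ) * Complex.I, 0,
       ((3 * Real.sqrt 10 / 10 : ℝ) : ℂ) * Complex.I, 0;
     0, 0, ((2 * Real.sqrt 15 / 5 : ℝ) : ℂ), 0, 0]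

lemma norm_deriv (x : E3) (hx : ‖x‖ = 1) :
    HasFDerivAt (fun y : E3 => ‖y‖) (innerSL ℝ x) x := by
  have h1 : HasFDerivAt (fun y : E3 => ‖y‖ ^ 2) (2 • innerSL ℝ x) x :=
    (hasStrictFDerivAt_norm_sq x).hasFDerivAt
  have h2 : HasDerivAt Real.sqrt (1 / (2 * Real.sqrt (‖x‖ ^ 2))) (‖x‖ ^ 2) :=
    Real.hasDerivAt_sqrt (by rw [hx]; norm_num)
  have h3 := h2.comp_hasFDerivAt x h1
  have heq : (fun y : E3 => Real.sqrt (‖y‖ ^ 2)) = fun y : E3 => ‖y‖ := by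
    funext y; rw [Real.sqrt_sq (norm_nonneg y)]
  rw [Function.comp_def, heq] at h3
  refine h3.congr_fderiv ?_
  rw [hx]
  ext v
  simp


lemma surfGrad_Y10 (x : E3) (hx : ‖x‖ = 1) (i : Fin 3) :
    surfGrad Y10 x i = (Real.sqrt (3 / (4 * Real.pi)) : ℂ) *
      ((((if i = 2 then (1:ℝ) else 0) - x 2 * x i : ℝ)) : ℂ) := by
  have hinv : HasFDerivAt (fun y : E3 => ‖y‖⁻¹) (-innerSL ℝ x) x := by
    have h := (hasDerivAt_inv (show ‖x‖ ≠ 0 by rw [hx]; norm_num)).comp_hasFDerivAt x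
      (norm_deriv x hx)
    refine h.congr_fderiv ?_
    rw [hx]; ext v; simp
  have hproj : HasFDerivAt (fun y : E3 => y 2)
      (EuclideanSpace.proj (2 : Fin 3) : E3 →L[ℝ] ℝ) x :=
    (EuclideanSpace.proj (2 : Fin 3) : E3 →L[ℝ] ℝ).hasFDerivAt
  have hf := hinv.mul hproj
  have hof := (Complex.ofRealCLM.hasFDerivAt.comp x hf).const_mul
      ((Real.sqrt (3 / (4 * Real.pi)) : ℂ))
  have hof2 := hof.congr_of_eventuallyEq (Filter.Eventually.of_forall
    (fun y => by simp [Y10, unitize, Function.comp, mul_comm] :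
      ∀ y : E3, Y10 (unitize y) = _))
  rw [surfGrad, hof2.fderiv]
  simp [hx, EuclideanSpace.single_apply, real_inner_comm x, EuclideanSpace.inner_single_right]
  push_cast [eq_comm (a := (2:Fin 3))]
  ring

lemma sqrtC : Real.sqrt 10 * Real.sqrt (15 / (8 * Real.pi))
    = 5 * Real.sqrt (3 / (4 * Real.pi)) := by
  have hπ := Real.pi_pos
  rw [← Real.sqrt_mul (by norm_num)]
  have h : (10 : ℝ) * (15 / (8 * Real.pi)) = 5 ^ 2 * (3 / (4 * Real.pi)) := by
    field_simp; ring
  rw [h, Real.sqrt_mul (by positivity), Real.sqrt_sq (by norm_num)]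

lemma sqrtD : Real.sqrt 15 * Real.sqrt (5 / (16 * Real.pi))
    = (5 / 2) * Real.sqrt (3 / (4 * Real.pi)) := by
  have hπ := Real.pi_pos
  rw [← Real.sqrt_mul (by norm_num)]
  have h : (15 : ℝ) * (5 / (16 * Real.pi)) = (5 / 2) ^ 2 * (3 / (4 * Real.pi)) := by
    field_simp; ring
  rw [h, Real.sqrt_mul (by positivity), Real.sqrt_sq (by norm_num)]

lemma realA : (3 * Real.sqrt 10 / 10) * Real.sqrt (15 / (8 * Real.pi))
    = 3 / 2 * Real.sqrt (3 / (4 * Real.pi)) := by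
  have hπ := Real.pi_pos
  have h1 : Real.sqrt 10 * Real.sqrt (15 / (8 * Real.pi))
      = 5 * Real.sqrt (3 / (4 * Real.pi)) := by
    rw [← Real.sqrt_mul (by norm_num)]
    have h : (10 : ℝ) * (15 / (8 * Real.pi)) = 5 ^ 2 * (3 / (4 * Real.pi)) := by
      field_simp; ring
    rw [h, Real.sqrt_mul (by positivity), Real.sqrt_sq (by norm_num)]
  nlinarith [h1]

lemma realB : (2 * Real.sqrt 15 / 5) * Real.sqrt (5 / (16 * Real.pi))
    = Real.sqrt (3 / (4 * Real.pi)) := by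
  have hπ := Real.pi_pos
  have h1 : Real.sqrt 15 * Real.sqrt (5 / (16 * Real.pi))
      = (5 / 2) * Real.sqrt (3 / (4 * Real.pi)) := by
    rw [← Real.sqrt_mul (by norm_num)]
    have h : (15 : ℝ) * (5 / (16 * Real.pi)) = (5 / 2) ^ 2 * (3 / (4 * Real.pi)) := by
      field_simp; ring
    rw [h, Real.sqrt_mul (by positivity), Real.sqrt_sq (by norm_num)]
  nlinarith [h1]

/-- `𝒩₂⁰(x̂) = −∇_S Y₁⁰(x̂) + 2 Y₁⁰(x̂) x̂ = N⁽⁰⁾ (Y₂⁻², Y₂⁻¹, Y₂⁰, Y₂¹, Y₂²)ᵀ(x̂)`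
for all `x̂ ∈ 𝕊²`, componentwise in `ℂ³`. -/
theorem Nvec_two_zero_eq_matrix_combination (x : E3) (hx : ‖x‖ = 1) (i : Fin 3) :
    -surfGrad Y10 x i + 2 * Y10 x * ((x i : ℝ) : ℂ) = ∑ j : Fin 5, N0 i j * Y2 j x := by
  have hA : ((3 * Real.sqrt 10 / 10 : ℝ) : ℂ) * ((Real.sqrt (15 / (8 * Real.pi)) : ℝ) : ℂ)
      = 3 / 2 * ((Real.sqrt (3 / (4 * Real.pi)) : ℝ) : ℂ) := by
    rw [← Complex.ofReal_mul, realA]; push_cast; ring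
  have hB : ((2 * Real.sqrt 15 / 5 : ℝ) : ℂ) * ((Real.sqrt (5 / (16 * Real.pi)) : ℝ) : ℂ)
      = ((Real.sqrt (3 / (4 * Real.pi)) : ℝ) : ℂ) := by
    rw [← Complex.ofReal_mul, realB]
  have hC : ((Real.sqrt 10 : ℝ) : ℂ) * ((Real.sqrt (15 / (8 * Real.pi)) : ℝ) : ℂ)
      = 5 * ((Real.sqrt (3 / (4 * Real.pi)) : ℝ) : ℂ) := by
    rw [← Complex.ofReal_mul, sqrtC]; push_cast; ring
  have hD : ((Real.sqrt 15 : ℝ) : ℂ) * ((Real.sqrt (5 / (16 * Real.pi)) : ℝ) : ℂ)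
      = 5 / 2 * ((Real.sqrt (3 / (4 * Real.pi)) : ℝ) : ℂ) := by
    rw [← Complex.ofReal_mul, sqrtD]; push_cast; ring
  rw [surfGrad_Y10 x hx i, Y10]
  fin_cases i
  · simp [Fin.sum_univ_five, N0, Y2, -Real.sqrt_mul, -Real.sqrt_mul', -Real.sqrt_inv,
      -Real.sqrt_div, -Real.sqrt_div', -Complex.ofReal_div, -Complex.ofReal_mul,
      -Complex.ofReal_inv, -Complex.ofReal_ofNat, -Complex.ofReal_one]
    push_cast
    linear_combination (-(3 / 5) * (x 2 : ℂ) * (x 0 : ℂ)) * hC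
  · simp [Fin.sum_univ_five, N0, Y2, -Real.sqrt_mul, -Real.sqrt_mul', -Real.sqrt_inv,
      -Real.sqrt_div, -Real.sqrt_div', -Complex.ofReal_div, -Complex.ofReal_mul,
      -Complex.ofReal_inv, -Complex.ofReal_ofNat, -Complex.ofReal_one]
    push_cast
    linear_combination ((3 / 5) * Complex.I ^ 2 * (x 2 : ℂ) * (x 1 : ℂ)) * hC
      + (3 * ((Real.sqrt (3 / (4 * Real.pi)) : ℝ) : ℂ) * (x 2 : ℂ) * (x 1 : ℂ)) * Complex.I_sq
  · simp [Fin.sum_univ_five, N0, Y2, -Real.sqrt_mul, -Real.sqrt_mul', -Real.sqrt_inv,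
      -Real.sqrt_div, -Real.sqrt_div', -Complex.ofReal_div, -Complex.ofReal_mul,
      -Complex.ofReal_inv, -Complex.ofReal_ofNat, -Complex.ofReal_one]
    push_cast
    linear_combination ((2 / 5) - (6 / 5) * (x 2 : ℂ) ^ 2) * hD
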